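/- Let n, d ≥ 1, let v_0, v_1, …, v_n ∈ ℝ^d, and consider the (possibly degenerate) parallelepiped whose vertices are the points P(ε) = v_0 + Σ_{i=1}^n ε_i v_i for ε ∈ {0,1}^n. Then the number of ε ∈ {0,1}^n such that ‖P(ε)‖ < ‖P(ε')‖ (Euclidean norm) for every ε' ∈ {0,1}^n differing from ε in exactly one coordinate is at most binomial(n, ⌊n/2⌋). -/

import Mathlib

open Finset
open scoped symmDiff

variable {ι : Type*} [DecidableEq ι] {E : Type*} [NormedAddCommGroup E] [InnerProductSpace ℝ E]

def kcount (n k : ℕ) : ℕ := if k ≤ n + 1 then n.choose ((n + 1 - k) / 2) else 0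


lemma pascal (N t : ℕ) : (N + 1).choose (t + 1) = N.choose (t + 1) + N.choose t := by
  rw [Nat.choose_succ_succ' N t]; omega

lemma kcount_one (n : ℕ) : kcount n 1 = n.choose (n / 2) := by
  simp [kcount]

lemma kcount_step_one (n : ℕ) : kcount (n + 1) 1 = kcount n 1 + kcount n 2 := by
  rcases n with _ | m
  · simp [kcount]
  · have h1 : kcount (m + 2) 1 = (m + 2).choose ((m + 2) / 2) := kcount_one _
    have h2 : kcount (m + 1) 1 = (m + 1).choose ((m + 1) / 2) := kcount_one _
    have h3 : kcount (m + 1) 2 = (m + 1).choose (m / 2) := by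
      have e : (m + 1 + 1 - 2) / 2 = m / 2 := by omega
      simp only [kcount, if_pos (by omega : 2 ≤ m + 1 + 1), e]
    rw [h1, h2, h3]
    rcases Nat.even_or_odd m with ⟨t, ht⟩ | ⟨t, ht⟩
    · -- m = t + t
      have e1 : (m + 2) / 2 = t + 1 := by omega
      have e2 : (m + 1) / 2 = t := by omega
      have e3 : m / 2 = t := by omega
      rw [e1, e2, e3]
      have hm : m + 2 = (m + 1) + 1 := by omega
      rw [hm, pascal (m + 1) t]
      have hs := Nat.choose_symm (by omega : t + 1 ≤ m + 1)
      have e4 : m + 1 - (t + 1) = t := by omega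
      rw [e4] at hs
      omega
    · -- m = 2 * t + 1
      have e1 : (m + 2) / 2 = t + 1 := by omega
      have e2 : (m + 1) / 2 = t + 1 := by omega
      have e3 : m / 2 = t := by omega
      rw [e1, e2, e3]
      have hm : m + 2 = (m + 1) + 1 := by omega
      rw [hm, pascal (m + 1) t]

lemma kcount_step (n k : ℕ) : kcount (n + 1) (k + 2) = kcount n (k + 1) + kcount n (k + 3) := by
  by_cases hk : k ≤ n
  · have h1 : kcount (n + 1) (k + 2) = (n + 1).choose ((n - k) / 2) := by
      simp only [kcount, if_pos (by omega : k + 2 ≤ n + 1 + 1)]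
      congr 1
      omega
    have h2 : kcount n (k + 1) = n.choose ((n - k) / 2) := by
      simp only [kcount, if_pos (by omega : k + 1 ≤ n + 1)]
      congr 1
      omega
    rw [h1, h2]
    by_cases hk2 : k + 2 ≤ n
    · have h3 : kcount n (k + 3) = n.choose ((n - k - 2) / 2) := by
        simp only [kcount, if_pos (by omega : k + 3 ≤ n + 1)]
        congr 1
        omega
      rw [h3]
      have hm2 : 2 ≤ n - k := by omega
      obtain ⟨u, hu⟩ : ∃ u, (n - k) / 2 = u + 1 := ⟨(n - k) / 2 - 1, by omega⟩
      have e2 : (n - k - 2) / 2 = u := by omega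
      rw [hu, e2, pascal n u]
    · have h3 : kcount n (k + 3) = 0 := by
        simp only [kcount, if_neg (by omega : ¬ (k + 3 ≤ n + 1))]
      have e : (n - k) / 2 = 0 := by omega
      rw [h3, e]
      simp
  · have h1 : kcount (n + 1) (k + 2) = 0 := by
      simp only [kcount, if_neg (by omega : ¬ (k + 2 ≤ n + 1 + 1))]
    have h2 : kcount n (k + 1) = 0 := by
      simp only [kcount, if_neg (by omega : ¬ (k + 1 ≤ n + 1))]
    have h3 : kcount n (k + 3) = 0 := by
      simp only [kcount, if_neg (by omega : ¬ (k + 3 ≤ n + 1))]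
    omega


theorem kleitman_partition (v : ι → E) (s : Finset ι) :
    ∃ P : Finset (Finset (Finset ι)),
      (∀ K ∈ P, ∀ A ∈ K, A ⊆ s) ∧
      (∀ A : Finset ι, A ⊆ s → ∃ K ∈ P, A ∈ K) ∧
      (∀ K ∈ P, ∀ L ∈ P, K ≠ L → Disjoint K L) ∧
      (∀ K ∈ P, K.Nonempty) ∧
      (∀ K ∈ P, ∀ A ∈ K, ∀ B ∈ K, A ≠ B →
        ∑ i ∈ A ∆ B, ‖v i‖ ^ 2 ≤ ‖(∑ i ∈ A, v i) - ∑ i ∈ B, v i‖ ^ 2) ∧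
      (∀ k : ℕ, (P.filter fun K => k + 1 ≤ K.card).card = kcount s.card (k + 1)) := by
  induction s using Finset.cons_induction with
  | empty =>
      refine ⟨{{∅}}, ?_, ?_, ?_, ?_, ?_, ?_⟩
      · intro K hK A hA
        simp only [mem_singleton] at hK
        subst hK
        simp only [mem_singleton] at hA
        subst hA
        exact Finset.Subset.refl _
      · intro A hA
        refine ⟨{∅}, by simp, ?_⟩
        simp [Finset.subset_empty.1 hA]
      · intro K hK L hL hKL
        simp only [mem_singleton] at hK hL
        exact absurd (hK.trans hL.symm) hKL
      · intro K hK
        simp only [mem_singleton] at hK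
        subst hK
        exact ⟨∅, by simp⟩
      · intro K hK A hA B hB hAB
        simp only [mem_singleton] at hK
        subst hK
        simp only [mem_singleton] at hA hB
        exact absurd (hA.trans hB.symm) hAB
      · intro k
        rw [Finset.filter_singleton]
        rcases k with _ | j <;> simp [kcount]
  | cons a s has ih =>
      classical
      obtain ⟨P, hsub, hcov, hdisj, hne, hfar, hcount⟩ := ih
      set f : Finset ι → ℝ := fun A => (inner ℝ (∑ i ∈ A, v i) (v a) : ℝ) with hf
      have hxe : ∀ K : Finset (Finset ι),
          ∃ x : Finset ι, K ∈ P → x ∈ K ∧ ∀ y ∈ K, f y ≤ f x := by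
        intro K
        by_cases hK : K ∈ P
        · obtain ⟨x, hx1, hx2⟩ := K.exists_max_image f (hne K hK)
          exact ⟨x, fun _ => ⟨hx1, hx2⟩⟩
        · exact ⟨∅, fun h => absurd h hK⟩
      choose xst hxst using hxe
      set g1 : Finset (Finset ι) → Finset (Finset ι) :=
        fun K => insert (insert a (xst K)) K with hg1
      set g2 : Finset (Finset ι) → Finset (Finset ι) :=
        fun K => (K.erase (xst K)).image (insert a) with hg2
      set Q : Finset (Finset (Finset ι)) :=
        P.image g1 ∪ (P.filter fun K => 2 ≤ K.card).image g2 with hQ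
      -- basic facts
      have hafree : ∀ K ∈ P, ∀ A ∈ K, a ∉ A := fun K hK A hA ha => has (hsub K hK A hA ha)
      have hinsinj : ∀ A B : Finset ι, a ∉ A → a ∉ B → insert a A = insert a B → A = B := by
        intro A B hA hB h
        rw [← Finset.erase_insert hA, ← Finset.erase_insert hB, h]
      have hxstmem : ∀ K ∈ P, xst K ∈ K := fun K hK => (hxst K hK).1
      have hxstmax : ∀ K ∈ P, ∀ y ∈ K, f y ≤ f (xst K) := fun K hK => (hxst K hK).2
      have haxst : ∀ K ∈ P, a ∉ xst K := fun K hK => hafree K hK _ (hxstmem K hK)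
      have hnewnot : ∀ K ∈ P, insert a (xst K) ∉ K := by
        intro K hK h
        exact hafree K hK _ h (Finset.mem_insert_self a _)
      have hcard1 : ∀ K ∈ P, (g1 K).card = K.card + 1 := by
        intro K hK
        rw [hg1]
        exact Finset.card_insert_of_notMem (hnewnot K hK)
      have hcard2 : ∀ K ∈ P, (g2 K).card = K.card - 1 := by
        intro K hK
        rw [hg2]
        rw [Finset.card_image_of_injOn, Finset.card_erase_of_mem (hxstmem K hK)]
        intro A hA B hB h
        exact hinsinj A B (hafree K hK A (Finset.mem_of_mem_erase hA))
          (hafree K hK B (Finset.mem_of_mem_erase hB)) h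
      -- membership descriptions
      have hmemg1 : ∀ K, ∀ A, A ∈ g1 K ↔ A = insert a (xst K) ∨ A ∈ K := by
        intro K A; rw [hg1]; exact Finset.mem_insert
      have hmemg2 : ∀ K, ∀ A, A ∈ g2 K ↔ ∃ B ∈ K.erase (xst K), insert a B = A := by
        intro K A; rw [hg2]; exact Finset.mem_image
      have hsub' : ∀ K' ∈ Q, ∀ A ∈ K', A ⊆ Finset.cons a s has := by
        intro K' hK' A hA
        rw [hQ, Finset.mem_union] at hK'
        rcases hK' with hK' | hK'
        · obtain ⟨K, hK, rfl⟩ := Finset.mem_image.1 hK'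
          rcases (hmemg1 K A).1 hA with rfl | hAK
          · intro i hi
            rcases Finset.mem_insert.1 hi with rfl | hi
            · exact Finset.mem_cons_self _ _
            · exact Finset.mem_cons.2 (Or.inr (hsub K hK _ (hxstmem K hK) hi))
          · exact fun i hi => Finset.mem_cons.2 (Or.inr (hsub K hK A hAK hi))
        · obtain ⟨K, hK, rfl⟩ := Finset.mem_image.1 hK'
          obtain ⟨B, hB, rfl⟩ := (hmemg2 K A).1 hA
          intro i hi
          rcases Finset.mem_insert.1 hi with rfl | hi
          · exact Finset.mem_cons_self _ _
          · exact Finset.mem_cons.2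
              (Or.inr (hsub K (Finset.mem_of_mem_filter K hK) _ (Finset.mem_of_mem_erase hB) hi))
      have hg1Q : ∀ K ∈ P, g1 K ∈ Q := by
        intro K hK
        rw [hQ, Finset.mem_union]
        exact Or.inl (Finset.mem_image_of_mem _ hK)
      have hcov' : ∀ A : Finset ι, A ⊆ Finset.cons a s has → ∃ K' ∈ Q, A ∈ K' := by
        intro A hA
        by_cases ha : a ∈ A
        · have hA0 : A.erase a ⊆ s := by
            intro i hi
            have := hA (Finset.mem_of_mem_erase hi)
            rcases Finset.mem_cons.1 this with rfl | h
            · exact absurd rfl (Finset.ne_of_mem_erase hi)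
            · exact h
          obtain ⟨K, hK, hK0⟩ := hcov _ hA0
          by_cases hx : A.erase a = xst K
          · refine ⟨g1 K, hg1Q K hK, ?_⟩
            rw [hmemg1]
            left
            rw [← hx, Finset.insert_erase ha]
          · refine ⟨g2 K, ?_, ?_⟩
            · rw [hQ, Finset.mem_union]
              refine Or.inr (Finset.mem_image_of_mem _ (Finset.mem_filter.2 ⟨hK, ?_⟩))
              exact Finset.one_lt_card.2 ⟨_, hK0, _, hxstmem K hK, hx⟩
            · rw [hmemg2]
              exact ⟨A.erase a, Finset.mem_erase.2 ⟨hx, hK0⟩, Finset.insert_erase ha⟩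
        · have hAs : A ⊆ s := by
            intro i hi
            rcases Finset.mem_cons.1 (hA hi) with rfl | h
            · exact absurd hi ha
            · exact h
          obtain ⟨K, hK, hAK⟩ := hcov _ hAs
          exact ⟨g1 K, hg1Q K hK, (hmemg1 K A).2 (Or.inr hAK)⟩
      have hcap : ∀ K ∈ P, ∀ L ∈ P, ∀ x : Finset ι, x ∈ K → x ∈ L → K = L := by
        intro K hK L hL x hxK hxL
        by_contra h
        exact (Finset.disjoint_left.1 (hdisj K hK L hL h) hxK) hxL
      have hdisj' : ∀ K' ∈ Q, ∀ L' ∈ Q, K' ≠ L' → Disjoint K' L' := by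
        intro K' hK' L' hL' hKL'
        rw [Finset.disjoint_left]
        intro A hAK hAL
        rw [hQ, Finset.mem_union] at hK' hL'
        rcases hK' with hK' | hK' <;> rcases hL' with hL' | hL'
        · obtain ⟨K, hK, rfl⟩ := Finset.mem_image.1 hK'
          obtain ⟨L, hL, rfl⟩ := Finset.mem_image.1 hL'
          rcases (hmemg1 K A).1 hAK with rfl | hAK2 <;>
            rcases (hmemg1 L _).1 hAL with h2 | hAL2
          · have hx : xst K = xst L :=
              hinsinj _ _ (haxst K hK) (haxst L hL) h2
            have : K = L := hcap K hK L hL (xst K) (hxstmem K hK) (hx ▸ hxstmem L hL)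
            exact hKL' (by rw [this])
          · exact hafree L hL _ hAL2 (Finset.mem_insert_self a _)
          · exact hafree K hK _ hAK2 (by rw [h2]; exact Finset.mem_insert_self a (xst L))
          · exact hKL' (by rw [hcap K hK L hL A hAK2 hAL2])
        · obtain ⟨K, hK, rfl⟩ := Finset.mem_image.1 hK'
          obtain ⟨L, hLf, rfl⟩ := Finset.mem_image.1 hL'
          have hL : L ∈ P := Finset.mem_of_mem_filter L hLf
          obtain ⟨B, hB, rfl⟩ := (hmemg2 L A).1 hAL
          have hBL : B ∈ L := Finset.mem_of_mem_erase hB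
          have hBfree : a ∉ B := hafree L hL B hBL
          rcases (hmemg1 K _).1 hAK with h2 | hAK2
          · have hx : B = xst K := hinsinj _ _ hBfree (haxst K hK) h2
            have hKL : K = L := hcap K hK L hL (xst K) (hxstmem K hK) (hx ▸ hBL)
            exact (Finset.mem_erase.1 hB).1 (by rw [hx, hKL])
          · exact hafree K hK _ hAK2 (Finset.mem_insert_self a B)
        · obtain ⟨K, hKf, rfl⟩ := Finset.mem_image.1 hK'
          obtain ⟨L, hL, rfl⟩ := Finset.mem_image.1 hL'
          have hK : K ∈ P := Finset.mem_of_mem_filter K hKf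
          obtain ⟨B, hB, rfl⟩ := (hmemg2 K A).1 hAK
          have hBK : B ∈ K := Finset.mem_of_mem_erase hB
          have hBfree : a ∉ B := hafree K hK B hBK
          rcases (hmemg1 L _).1 hAL with h2 | hAL2
          · have hx : B = xst L := hinsinj _ _ hBfree (haxst L hL) h2
            have hKL : K = L := hcap K hK L hL B hBK (hx ▸ hxstmem L hL)
            exact (Finset.mem_erase.1 hB).1 (by rw [hx, hKL])
          · exact hafree L hL _ hAL2 (Finset.mem_insert_self a B)
        · obtain ⟨K, hKf, rfl⟩ := Finset.mem_image.1 hK'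
          obtain ⟨L, hLf, rfl⟩ := Finset.mem_image.1 hL'
          have hK : K ∈ P := Finset.mem_of_mem_filter K hKf
          have hL : L ∈ P := Finset.mem_of_mem_filter L hLf
          obtain ⟨B, hB, rfl⟩ := (hmemg2 K A).1 hAK
          obtain ⟨C, hC, hCB⟩ := (hmemg2 L _).1 hAL
          have hBfree : a ∉ B := hafree K hK B (Finset.mem_of_mem_erase hB)
          have hCfree : a ∉ C := hafree L hL C (Finset.mem_of_mem_erase hC)
          have hBC : C = B := hinsinj _ _ hCfree hBfree hCB
          have hKL : K = L := hcap K hK L hL B (Finset.mem_of_mem_erase hB)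
            (hBC ▸ Finset.mem_of_mem_erase hC)
          exact hKL' (by rw [hKL])
      have hne' : ∀ K' ∈ Q, K'.Nonempty := by
        intro K' hK'
        rw [hQ, Finset.mem_union] at hK'
        rcases hK' with hK' | hK'
        · obtain ⟨K, hK, rfl⟩ := Finset.mem_image.1 hK'
          exact ⟨insert a (xst K), (hmemg1 K _).2 (Or.inl rfl)⟩
        · obtain ⟨K, hK, rfl⟩ := Finset.mem_image.1 hK'
          have h2 := (Finset.mem_filter.1 hK).2
          have hKP := Finset.mem_of_mem_filter K hK
          obtain ⟨B, hB⟩ : (K.erase (xst K)).Nonempty := by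
            rw [← Finset.card_pos, Finset.card_erase_of_mem (hxstmem K hKP)]
            omega
          exact ⟨insert a B, (hmemg2 K _).2 ⟨B, hB, rfl⟩⟩
      have hsdins : ∀ x B : Finset ι, a ∉ x → a ∉ B →
          (insert a x) ∆ B = insert a (x ∆ B) := by
        intro x B hx hB
        ext i
        by_cases hi : i = a
        · subst hi
          simp [Finset.mem_symmDiff, hx, hB]
        · simp [Finset.mem_symmDiff, Finset.mem_insert, hi]
      have hsdii : ∀ x y : Finset ι, a ∉ x → a ∉ y →
          (insert a x) ∆ (insert a y) = x ∆ y := by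
        intro x y hx hy
        ext i
        by_cases hi : i = a
        · subst hi
          simp [Finset.mem_symmDiff, hx, hy]
        · simp [Finset.mem_symmDiff, Finset.mem_insert, hi]
      have key : ∀ K ∈ P, ∀ B ∈ K,
          ∑ i ∈ (insert a (xst K)) ∆ B, ‖v i‖ ^ 2 ≤
            ‖(∑ i ∈ insert a (xst K), v i) - ∑ i ∈ B, v i‖ ^ 2 := by
        intro K hK B hB
        have hxf := haxst K hK
        have hBf := hafree K hK B hB
        have hans : a ∉ xst K ∆ B := by
          intro h
          rcases Finset.mem_symmDiff.1 h with ⟨h1, _⟩ | ⟨h1, _⟩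
          exacts [hxf h1, hBf h1]
        have hsum : ∑ i ∈ (insert a (xst K)) ∆ B, ‖v i‖ ^ 2
            = ‖v a‖ ^ 2 + ∑ i ∈ xst K ∆ B, ‖v i‖ ^ 2 := by
          rw [hsdins (xst K) B hxf hBf, Finset.sum_insert hans]
        have hps : (∑ i ∈ insert a (xst K), v i) - ∑ i ∈ B, v i
            = ((∑ i ∈ xst K, v i) - ∑ i ∈ B, v i) + v a := by
          rw [Finset.sum_insert hxf]
          abel
        have hinner : (0:ℝ) ≤ inner ℝ ((∑ i ∈ xst K, v i) - (∑ i ∈ B, v i)) (v a) := by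
          rw [inner_sub_left]
          have := hxstmax K hK B hB
          simp only [hf] at this
          linarith
        have hexp : ‖((∑ i ∈ xst K, v i) - ∑ i ∈ B, v i) + v a‖ ^ 2
            = ‖(∑ i ∈ xst K, v i) - ∑ i ∈ B, v i‖ ^ 2
              + 2 * inner ℝ ((∑ i ∈ xst K, v i) - ∑ i ∈ B, v i) (v a) + ‖v a‖ ^ 2 :=
          norm_add_sq_real _ _
        by_cases hBx : B = xst K
        · subst hBx
          rw [hsum, hps, hexp]
          simp [symmDiff_self, inner_zero_left]
        · have hfarKB := hfar K hK (xst K) (hxstmem K hK) B hB (fun h => hBx h.symm)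
          rw [hsum, hps, hexp]
          linarith
      have hfar' : ∀ K' ∈ Q, ∀ A ∈ K', ∀ B ∈ K', A ≠ B →
          ∑ i ∈ A ∆ B, ‖v i‖ ^ 2 ≤ ‖(∑ i ∈ A, v i) - ∑ i ∈ B, v i‖ ^ 2 := by
        intro K' hK' A hAK B hBK hAB
        rw [hQ, Finset.mem_union] at hK'
        rcases hK' with hK' | hK'
        · obtain ⟨K, hK, rfl⟩ := Finset.mem_image.1 hK'
          rcases (hmemg1 K A).1 hAK with hA2 | hAK2 <;>
            rcases (hmemg1 K B).1 hBK with hB2 | hBK2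
          · exact absurd (hA2.trans hB2.symm) hAB
          · subst hA2
            exact key K hK B hBK2
          · subst hB2
            rw [symmDiff_comm, norm_sub_rev]
            exact key K hK A hAK2
          · exact hfar K hK A hAK2 B hBK2 hAB
        · obtain ⟨K, hKf, rfl⟩ := Finset.mem_image.1 hK'
          have hK : K ∈ P := Finset.mem_of_mem_filter K hKf
          obtain ⟨B0, hB0, rfl⟩ := (hmemg2 K A).1 hAK
          obtain ⟨C0, hC0, hC0e⟩ := (hmemg2 K B).1 hBK
          subst hC0e
          have hB0f : a ∉ B0 := hafree K hK B0 (Finset.mem_of_mem_erase hB0)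
          have hC0f : a ∉ C0 := hafree K hK C0 (Finset.mem_of_mem_erase hC0)
          have hBC : B0 ≠ C0 := fun h => hAB (by rw [h])
          rw [hsdii B0 C0 hB0f hC0f, Finset.sum_insert hB0f, Finset.sum_insert hC0f]
          have hcancel : v a + (∑ i ∈ B0, v i) - (v a + ∑ i ∈ C0, v i)
              = (∑ i ∈ B0, v i) - ∑ i ∈ C0, v i := by abel
          rw [hcancel]
          exact hfar K hK B0 (Finset.mem_of_mem_erase hB0) C0 (Finset.mem_of_mem_erase hC0) hBC
      have hfilter1 : ∀ K ∈ P, (g1 K).filter (fun A => a ∉ A) = K := by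
        intro K hK
        ext A
        simp only [Finset.mem_filter]
        constructor
        · rintro ⟨hA, hafA⟩
          rcases (hmemg1 K A).1 hA with rfl | hA2
          · exact absurd (Finset.mem_insert_self a _) hafA
          · exact hA2
        · intro hA
          exact ⟨(hmemg1 K A).2 (Or.inr hA), hafree K hK A hA⟩
      have hg1injP : Set.InjOn g1 ↑P := by
        intro K hK L hL h
        rw [← hfilter1 K hK, ← hfilter1 L hL, h]
      have hg2injP : Set.InjOn g2 ↑(P.filter fun K => 2 ≤ K.card) := by
        intro K hKf L hLf h
        rw [Finset.mem_coe, Finset.mem_filter] at hKf hLf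
        obtain ⟨hK, hK2⟩ := hKf
        obtain ⟨hL, hL2⟩ := hLf
        obtain ⟨B, hB⟩ : (K.erase (xst K)).Nonempty := by
          rw [← Finset.card_pos, Finset.card_erase_of_mem (hxstmem K hK)]
          omega
        have h1 : insert a B ∈ g2 K := (hmemg2 K _).2 ⟨B, hB, rfl⟩
        rw [h] at h1
        obtain ⟨C, hC, hCB⟩ := (hmemg2 L _).1 h1
        have hBf : a ∉ B := hafree K hK B (Finset.mem_of_mem_erase hB)
        have hCf : a ∉ C := hafree L hL C (Finset.mem_of_mem_erase hC)
        have : C = B := hinsinj _ _ hCf hBf hCB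
        exact hcap K hK L hL B (Finset.mem_of_mem_erase hB)
          (this ▸ Finset.mem_of_mem_erase hC)
      have himg : Disjoint (P.image g1) ((P.filter fun K => 2 ≤ K.card).image g2) := by
        rw [Finset.disjoint_left]
        intro X hX1 hX2
        obtain ⟨K, hK, rfl⟩ := Finset.mem_image.1 hX1
        obtain ⟨L, hLf, hLX⟩ := Finset.mem_image.1 hX2
        obtain ⟨y, hy⟩ := hne K hK
        have hyg : y ∈ g2 L := by rw [hLX]; exact (hmemg1 K y).2 (Or.inr hy)
        obtain ⟨B, _, hBy⟩ := (hmemg2 L y).1 hyg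
        exact hafree K hK y hy (by rw [← hBy]; exact Finset.mem_insert_self a B)
      have hcount' : ∀ k : ℕ,
          (Q.filter fun K => k + 1 ≤ K.card).card = kcount (Finset.cons a s has).card (k + 1) := by
        intro k
        have hcards : (Finset.cons a s has).card = s.card + 1 := Finset.card_cons has
        have hpart1 : ((P.image g1).filter fun X => k + 1 ≤ X.card).card
            = (P.filter fun K => k ≤ K.card).card := by
          have hsub1 : ↑(P.filter fun K => k + 1 ≤ (g1 K).card) ⊆ (↑P : Set (Finset (Finset ι))) :=
            fun X hX => Finset.mem_coe.2 (Finset.mem_of_mem_filter _ (Finset.mem_coe.1 hX))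
          rw [Finset.filter_image, Finset.card_image_of_injOn (hg1injP.mono hsub1)]
          congr 1
          apply Finset.filter_congr
          intro K hK
          rw [hcard1 K hK]
          omega
        have hpart2 : (((P.filter fun K => 2 ≤ K.card).image g2).filter
              fun X => k + 1 ≤ X.card).card
            = (P.filter fun K => k + 1 + 1 ≤ K.card).card := by
          have hsub2 : ↑((P.filter fun K => 2 ≤ K.card).filter fun K => k + 1 ≤ (g2 K).card)
              ⊆ (↑(P.filter fun K => 2 ≤ K.card) : Set (Finset (Finset ι))) :=
            fun X hX => Finset.mem_coe.2 (Finset.mem_of_mem_filter _ (Finset.mem_coe.1 hX))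
          rw [Finset.filter_image, Finset.card_image_of_injOn (hg2injP.mono hsub2),
            Finset.filter_filter]
          congr 1
          apply Finset.filter_congr
          intro K hK
          rw [hcard2 K hK]
          omega
        rw [hQ, Finset.filter_union,
          Finset.card_union_of_disjoint (Finset.disjoint_filter_filter himg),
          hpart1, hpart2, hcards]
        rcases k with _ | j
        · have h0 : (P.filter fun K => 0 ≤ K.card) = P :=
            Finset.filter_true_of_mem (fun K _ =>  Nat.zero_le _)
          have h1 : (P.filter fun K => 0 + 1 ≤ K.card) = P :=
            Finset.filter_true_of_mem (fun K hK => Finset.card_pos.2 (hne K hK))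
          have e1 := hcount 0
          have e2 := hcount 1
          have hso := kcount_step_one s.card
          rw [h1] at e1
          rw [h0]
          show #P + #(filter (fun K => 1 + 1 ≤ #K) P) = kcount (#s + 1) (0 + 1)
          rw [e2, e1]
          have h01 : (0:ℕ) + 1 = 1 := rfl
          have h11 : (1:ℕ) + 1 = 2 := rfl
          rw [h01, h11]
          exact hso.symm
        · have e1 := hcount j
          have e2 := hcount (j + 2)
          have hstep := kcount_step s.card j
          have a1 : j + 2 + 1 = j + 3 := rfl
          have a2 : j + 1 + 1 = j + 2 := rfl
          rw [a1] at e2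
          rw [a2]
          rw [e1, e2]
          exact hstep.symm
      exact ⟨Q, hsub', hcov', hdisj', hne', hfar', hcount'⟩


variable {n d : ℕ}

-- support of a boolean vector
def bsupp (ε : Fin n → Bool) : Finset (Fin n) := Finset.univ.filter (fun j => ε j = true)

lemma bsupp_inj (ε ε' : Fin n → Bool) (h : bsupp ε = bsupp ε') : ε = ε' := by
  funext j
  have := Finset.ext_iff.1 h j
  simp only [bsupp, Finset.mem_filter, Finset.mem_univ, true_and] at this
  cases hj : ε j <;> cases hj' : ε' j <;> simp_all

lemma sum_ite_eq_bsupp (v : Fin n → EuclideanSpace ℝ (Fin d)) (ε : Fin n → Bool) :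
    ∑ j, (if ε j then (1 : ℝ) else 0) • v j = ∑ j ∈ bsupp ε, v j := by
  rw [bsupp, Finset.sum_filter]
  congr 1
  funext j
  by_cases h : ε j <;> simp [h]

lemma sum_ite_update (v : Fin n → EuclideanSpace ℝ (Fin d)) (ε : Fin n → Bool) (i : Fin n) :
    ∑ j, (if Function.update ε i (!ε i) j then (1 : ℝ) else 0) • v j
      = (∑ j, (if ε j then (1 : ℝ) else 0) • v j) + (if ε i then -(v i) else v i) := by
  have hmem : i ∈ (Finset.univ : Finset (Fin n)) := Finset.mem_univ i
  rw [← Finset.sum_erase_add _ _ hmem, ← Finset.sum_erase_add _ (fun j => (if ε j then (1:ℝ) else 0) • v j) hmem]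
  have hcong : ∑ j ∈ Finset.univ.erase i, (if Function.update ε i (!ε i) j then (1 : ℝ) else 0) • v j
      = ∑ j ∈ Finset.univ.erase i, (if ε j then (1 : ℝ) else 0) • v j := by
    apply Finset.sum_congr rfl
    intro j hj
    rw [Function.update_of_ne (Finset.ne_of_mem_erase hj)]
  rw [hcong, Function.update_self]
  cases hi : ε i <;> simp [hi] <;> abel

lemma good_pair_strict (v₀ : EuclideanSpace ℝ (Fin d)) (v : Fin n → EuclideanSpace ℝ (Fin d))
    (ε ε' : Fin n → Bool)
    (hx : ∀ i : Fin n,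
        ‖v₀ + ∑ j, (if ε j then (1 : ℝ) else 0) • v j‖ <
        ‖v₀ + ∑ j, (if Function.update ε i (!ε i) j then (1 : ℝ) else 0) • v j‖)
    (hy : ∀ i : Fin n,
        ‖v₀ + ∑ j, (if ε' j then (1 : ℝ) else 0) • v j‖ <
        ‖v₀ + ∑ j, (if Function.update ε' i (!ε' i) j then (1 : ℝ) else 0) • v j‖)
    (hne : ε ≠ ε') :
    ‖(∑ i ∈ bsupp ε, v i) - ∑ i ∈ bsupp ε', v i‖ ^ 2
      < ∑ i ∈ bsupp ε ∆ bsupp ε', ‖v i‖ ^ 2 := by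
  classical
  set A := bsupp ε with hA
  set B := bsupp ε' with hB
  set q : EuclideanSpace ℝ (Fin d) := v₀ + ∑ i ∈ A, v i with hq
  set r : EuclideanSpace ℝ (Fin d) := v₀ + ∑ i ∈ B, v i with hr
  set w : Fin n → EuclideanSpace ℝ (Fin d) := fun i => if ε' i then v i else -(v i) with hw
  have hAB : A ≠ B := fun h => hne (bsupp_inj _ _ h)
  have hSne : (A ∆ B).Nonempty := by
    rw [Finset.nonempty_iff_ne_empty]
    intro h
    rw [← Finset.bot_eq_empty] at h
    exact hAB (symmDiff_eq_bot.1 h)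
  have hmemS : ∀ i ∈ A ∆ B, ε i ≠ ε' i := by
    intro i hi
    rcases Finset.mem_symmDiff.1 hi with ⟨h1, h2⟩ | ⟨h1, h2⟩ <;>
      simp only [hA, hB, bsupp, Finset.mem_filter, Finset.mem_univ, true_and] at h1 h2 <;>
      simp_all
  -- per-coordinate inequality
  have hkey : ∀ i ∈ A ∆ B, (inner ℝ (r - q) (w i) : ℝ) < ‖v i‖ ^ 2 := by
    intro i hi
    have hii := hmemS i hi
    have h1 := hx i
    have h2 := hy i
    rw [sum_ite_update v ε i] at h1
    rw [sum_ite_update v ε' i] at h2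
    rw [sum_ite_eq_bsupp v ε] at h1
    rw [sum_ite_eq_bsupp v ε'] at h2
    have hxe : (if ε i then -(v i) else v i) = w i := by
      rw [hw]
      cases h : ε i <;> cases h' : ε' i <;> simp_all
    have hye : (if ε' i then -(v i) else v i) = -(w i) := by
      rw [hw]
      cases h' : ε' i <;> simp [h']
    rw [← add_assoc, ← hq, hxe] at h1
    rw [← add_assoc, ← hr, hye] at h2
    have hsq1 : ‖q‖ ^ 2 < ‖q + w i‖ ^ 2 :=
      pow_lt_pow_left₀ h1 (norm_nonneg _) (by norm_num)
    have hsq2 : ‖r‖ ^ 2 < ‖r + -(w i)‖ ^ 2 :=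
      pow_lt_pow_left₀ h2 (norm_nonneg _) (by norm_num)
    have he1 : ‖q + w i‖ ^ 2 = ‖q‖ ^ 2 + 2 * inner ℝ q (w i) + ‖w i‖ ^ 2 := norm_add_sq_real _ _
    have he2 : ‖r + -(w i)‖ ^ 2 = ‖r‖ ^ 2 + 2 * inner ℝ r (-(w i)) + ‖-(w i)‖ ^ 2 :=
      norm_add_sq_real _ _
    have hnw : ‖w i‖ = ‖v i‖ := by
      rw [hw]; cases h' : ε' i <;> simp [h']
    have hnnw : ‖-(w i)‖ = ‖v i‖ := by rw [norm_neg, hnw]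
    rw [inner_neg_right] at he2
    rw [inner_sub_left]
    rw [hnw] at he1
    rw [hnnw] at he2
    linarith
  have hsum := Finset.sum_lt_sum_of_nonempty hSne hkey
  have hsw : ∑ i ∈ A ∆ B, w i = (∑ i ∈ B, v i) - ∑ i ∈ A, v i := by
    have hd1 : Disjoint (B \ A) (A \ B) := disjoint_sdiff_sdiff
    have hsd : A ∆ B = (B \ A) ∪ (A \ B) := by
      rw [Finset.union_comm]
      exact symmDiff_def A B
    rw [hsd, Finset.sum_union hd1]
    have e1 : ∑ i ∈ B \ A, w i = ∑ i ∈ B \ A, v i := by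
      apply Finset.sum_congr rfl
      intro i hi
      have : ε' i = true := by
        have := (Finset.mem_sdiff.1 hi).1
        simpa [hB, bsupp] using this
      simp [hw, this]
    have e2 : ∑ i ∈ A \ B, w i = -∑ i ∈ A \ B, v i := by
      rw [← Finset.sum_neg_distrib]
      apply Finset.sum_congr rfl
      intro i hi
      have : ¬ (ε' i = true) := by
        have := (Finset.mem_sdiff.1 hi).2
        simpa [hB, bsupp] using this
      simp [hw, this]
    rw [e1, e2]
    have := Finset.sum_sdiff_sub_sum_sdiff (s₁ := A) (s₂ := B) (f := v)
    rw [sub_eq_add_neg] at this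
    rw [this]
  have hlhs : ∑ i ∈ A ∆ B, (inner ℝ (r - q) (w i) : ℝ) = ‖r - q‖ ^ 2 := by
    rw [← inner_sum, hsw]
    have : r - q = (∑ i ∈ B, v i) - ∑ i ∈ A, v i := by
      rw [hq, hr]; abel
    rw [← this, real_inner_self_eq_norm_sq]
  rw [hlhs] at hsum
  have : ‖(∑ i ∈ A, v i) - ∑ i ∈ B, v i‖ = ‖r - q‖ := by
    have he : r - q = (∑ i ∈ B, v i) - ∑ i ∈ A, v i := by rw [hq, hr]; abel
    rw [he, norm_sub_rev]
  rw [this]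
  exact hsum

theorem parallelepiped_close_vertices_bound' (n d : ℕ)
    (v₀ : EuclideanSpace ℝ (Fin d)) (v : Fin n → EuclideanSpace ℝ (Fin d))
    (P : Finset (Finset (Finset (Fin n))))
    (hcov : ∀ A : Finset (Fin n), A ⊆ Finset.univ → ∃ K ∈ P, A ∈ K)
    (hne : ∀ K ∈ P, K.Nonempty)
    (hfar : ∀ K ∈ P, ∀ A ∈ K, ∀ B ∈ K, A ≠ B →
        ∑ i ∈ A ∆ B, ‖v i‖ ^ 2 ≤ ‖(∑ i ∈ A, v i) - ∑ i ∈ B, v i‖ ^ 2)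
    (hcount : ∀ k : ℕ, (P.filter fun K => k + 1 ≤ K.card).card
        = kcount (Finset.univ : Finset (Fin n)).card (k + 1)) :
    {ε : Fin n → Bool |
      ∀ i : Fin n,
        ‖v₀ + ∑ j, (if ε j then (1 : ℝ) else 0) • v j‖ <
        ‖v₀ + ∑ j, (if Function.update ε i (!ε i) j then (1 : ℝ) else 0) • v j‖}.ncard
      ≤ n.choose (n / 2) := by
  classical
  have hPcard : P.card = n.choose (n / 2) := by
    have h1 : (P.filter fun K => 0 + 1 ≤ K.card) = P :=
      Finset.filter_true_of_mem (fun K hK => Finset.card_pos.2 (hne K hK))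
    have h2 := hcount 0
    rw [h1] at h2
    simp only [Finset.card_univ, Fintype.card_fin] at h2
    rw [h2]
    show kcount n 1 = n.choose (n / 2)
    exact kcount_one n
  have hclass : ∀ ε : Fin n → Bool, ∃ K ∈ P, bsupp ε ∈ K :=
    fun ε => hcov _ (Finset.subset_univ _)
  choose cl hclP hclmem using hclass
  have hinj : Set.InjOn cl {ε : Fin n → Bool |
      ∀ i : Fin n,
        ‖v₀ + ∑ j, (if ε j then (1 : ℝ) else 0) • v j‖ <
        ‖v₀ + ∑ j, (if Function.update ε i (!ε i) j then (1 : ℝ) else 0) • v j‖} := by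
    intro ε hε ε' hε' hcc
    by_contra hne'
    simp only [Set.mem_setOf_eq] at hε hε'
    have hstrict := good_pair_strict v₀ v ε ε' hε hε' hne'
    have hf := hfar (cl ε) (hclP ε) (bsupp ε) (hclmem ε) (bsupp ε')
      (by rw [hcc]; exact hclmem ε') (fun h => hne' (bsupp_inj _ _ h))
    linarith
  have hmap : ∀ ε ∈ {ε : Fin n → Bool |
      ∀ i : Fin n,
        ‖v₀ + ∑ j, (if ε j then (1 : ℝ) else 0) • v j‖ <
        ‖v₀ + ∑ j, (if Function.update ε i (!ε i) j then (1 : ℝ) else 0) • v j‖},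
      cl ε ∈ (↑P : Set (Finset (Finset (Fin n)))) := fun ε _ => hclP ε
  have hb := Set.ncard_le_ncard_of_injOn cl hmap hinj (P.finite_toSet)
  rwa [Set.ncard_coe_finset, hPcard] at hb

/-- A (possibly degenerate) parallelepiped in `ℝ^d`, with vertices
`P ε = v₀ + ∑ i, ε i • v i` for `ε ∈ {0,1}^n`, has at most `binomial(n, ⌊n/2⌋)` vertices
that are strictly closer to the origin (in Euclidean norm) than all of their neighbors,
where the neighbors of `P ε` are the `P ε'` with `ε'` differing from `ε` in exactly
one coordinate. -/
theorem parallelepiped_close_vertices_bound (n d : ℕ) (hn : 1 ≤ n) (hd : 1 ≤ d)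
    (v₀ : EuclideanSpace ℝ (Fin d)) (v : Fin n → EuclideanSpace ℝ (Fin d)) :
    {ε : Fin n → Bool |
      ∀ i : Fin n,
        ‖v₀ + ∑ j, (if ε j then (1 : ℝ) else 0) • v j‖ <
        ‖v₀ + ∑ j, (if Function.update ε i (!ε i) j then (1 : ℝ) else 0) • v j‖}.ncard
      ≤ n.choose (n / 2) := by
  classical
  obtain ⟨P, hsub, hcov, hdisj, hne, hfar, hcount⟩ :=
    kleitman_partition v (Finset.univ : Finset (Fin n))
  exact parallelepiped_close_vertices_bound' n d v₀ v P hcov hne hfar hcount
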